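/- Fix an integer k ≥ 1 and a real ε > 0. There exists N₀ such that for every N ≥ N₀, every family of N pairwise distinct points z_1, …, z_N ∈ ℤ^k and every μ ∈ ℝ^k satisfy Σ_{i=1}^N ‖z_i − μ‖² ≥ (1 − ε) · (k · Γ(k/2 + 1)^{2/k} / (π · (k+2))) · N^{1 + 2/k}. -/

import Mathlib

open MeasureTheory Finset Real Filter
open scoped ENNReal

namespace Stmt18Aux

noncomputable def ω (k : ℕ) : ℝ := Real.sqrt Real.pi ^ k / Real.Gamma ((k : ℝ) / 2 + 1)

lemma gamma_pos (k : ℕ) : 0 < Real.Gamma ((k : ℝ) / 2 + 1) :=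
  Real.Gamma_pos_of_pos (by positivity)

lemma omega_pos (k : ℕ) : 0 < ω k :=
  div_pos (pow_pos (Real.sqrt_pos.2 Real.pi_pos) k) (gamma_pos k)

lemma dist_sq_eq {k : ℕ} (x y : EuclideanSpace ℝ (Fin k)) :
    dist x y = Real.sqrt (∑ j, (x j - y j) ^ 2) := by
  rw [EuclideanSpace.dist_eq]
  congr 1
  refine Finset.sum_congr rfl fun j _ => ?_
  rw [Real.dist_eq, sq_abs]

lemma count_le {k : ℕ} (hk : 1 ≤ k) {N : ℕ} (z : Fin N → Fin k → ℤ)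
    (hz : Function.Injective z) (μ : Fin k → ℝ) (r : ℝ) (hr : 0 ≤ r) :
    (((Finset.univ.filter fun i : Fin N =>
        ∑ j, ((z i j : ℝ) - μ j) ^ 2 ≤ r ^ 2)).card : ℝ) ≤
      ω k * (r + Real.sqrt k) ^ k := by
  haveI : Nonempty (Fin k) := ⟨⟨0, hk⟩⟩
  set μE : EuclideanSpace ℝ (Fin k) := WithLp.toLp 2 μ with hμE
  set Z : Fin N → EuclideanSpace ℝ (Fin k) := fun i => WithLp.toLp 2 (fun j => (z i j : ℝ)) with hZ
  set T := (Finset.univ.filter fun i : Fin N =>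
      ∑ j, ((z i j : ℝ) - μ j) ^ 2 ≤ r ^ 2) with hT
  set C : Fin N → Set (EuclideanSpace ℝ (Fin k)) := fun i =>
    {x | ∀ j, (z i j : ℝ) ≤ x j ∧ x j < z i j + 1} with hC
  have hCpre : ∀ i, C i = (MeasurableEquiv.toLp 2 (Fin k → ℝ)).symm ⁻¹'
      (Set.univ.pi fun j => Set.Ico ((z i j : ℝ)) (z i j + 1)) := by
    intro i; ext x; simp [hC, Set.mem_pi]
  have hmeas : ∀ i, MeasurableSet (C i) := by
    intro i; rw [hCpre i]
    exact (MeasurableSet.univ_pi fun j => measurableSet_Ico).preimage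
      (MeasurableEquiv.toLp 2 (Fin k → ℝ)).symm.measurable
  have hvol : ∀ i, volume (C i) = 1 := by
    intro i
    rw [hCpre i, (EuclideanSpace.volume_preserving_symm_measurableEquiv_toLp (Fin k)).measure_preimage
      ((MeasurableSet.univ_pi fun j => measurableSet_Ico).nullMeasurableSet), volume_pi_pi]
    simp
  have hdisj : Set.PairwiseDisjoint (T : Set (Fin N)) C := by
    intro i _ i' _ hne
    refine Set.disjoint_left.2 fun x hx hx' => ?_
    have hzz : z i ≠ z i' := fun h => hne (hz h)
    obtain ⟨j, hj⟩ : ∃ j, z i j ≠ z i' j := by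
      by_contra h; push_neg at h; exact hzz (funext h)
    have h1 := hx j
    have h2 := hx' j
    have e1 : ⌊x j⌋ = z i j := Int.floor_eq_iff.2 ⟨h1.1, by push_cast; exact h1.2⟩
    have e2 : ⌊x j⌋ = z i' j := Int.floor_eq_iff.2 ⟨h2.1, by push_cast; exact h2.2⟩
    exact hj (e1 ▸ e2)
  have hsub : (⋃ i ∈ T, C i) ⊆ Metric.closedBall μE (r + Real.sqrt k) := by
    intro x hx
    simp only [Set.mem_iUnion] at hx
    obtain ⟨i, hiT, hxC⟩ := hx
    have hdi : dist (Z i) μE ≤ r := by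
      rw [dist_sq_eq]
      have hsum : ∑ j, ((z i j : ℝ) - μ j) ^ 2 ≤ r ^ 2 := by
        rw [hT] at hiT; exact (Finset.mem_filter.1 hiT).2
      calc Real.sqrt (∑ j, (Z i j - μE j) ^ 2) ≤ Real.sqrt (r ^ 2) :=
            Real.sqrt_le_sqrt hsum
        _ = r := Real.sqrt_sq hr
    have hxz : dist x (Z i) ≤ Real.sqrt k := by
      rw [dist_sq_eq]
      have hsum : ∑ j, (x j - Z i j) ^ 2 ≤ (k : ℝ) := by
        calc ∑ j, (x j - Z i j) ^ 2 ≤ ∑ _j : Fin k, (1 : ℝ) := by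
              refine Finset.sum_le_sum fun j _ => ?_
              have h := hxC j
              nlinarith [h.1, h.2]
          _ = (k : ℝ) := by simp
      exact Real.sqrt_le_sqrt hsum
    rw [Metric.mem_closedBall]
    calc dist x μE ≤ dist x (Z i) + dist (Z i) μE := dist_triangle _ _ _
      _ ≤ Real.sqrt k + r := add_le_add hxz hdi
      _ = r + Real.sqrt k := add_comm _ _
  have hcard : (T.card : ℝ≥0∞) ≤ volume (Metric.closedBall μE (r + Real.sqrt k)) := by
    calc (T.card : ℝ≥0∞) = ∑ i ∈ T, volume (C i) := by simp [hvol]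
      _ = volume (⋃ i ∈ T, C i) :=
          (measure_biUnion_finset hdisj fun i _ => hmeas i).symm
      _ ≤ _ := measure_mono hsub
  rw [EuclideanSpace.volume_closedBall] at hcard
  have hrk : (0:ℝ) ≤ r + Real.sqrt k := by positivity
  rw [Fintype.card_fin, ← ENNReal.ofReal_pow hrk, ← ENNReal.ofReal_mul (by positivity),
    ← ENNReal.ofReal_natCast] at hcard
  have hfin : (T.card : ℝ) ≤ (r + Real.sqrt k) ^ k * (Real.sqrt Real.pi ^ k /
      Real.Gamma ((k : ℝ) / 2 + 1)) :=
    (ENNReal.ofReal_le_ofReal_iff (by positivity)).1 hcard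
  rw [ω, mul_comm]
  exact hfin

lemma sum_rpow_lower (p : ℝ) (hp : 0 ≤ p) (N : ℕ) :
    (N : ℝ) ^ (p + 1) ≤ (p + 1) * ∑ m ∈ Finset.range N, ((m : ℝ) + 1) ^ p := by
  induction N with
  | zero => simp [Real.zero_rpow (by positivity : p + 1 ≠ 0)]
  | succ n ih =>
    rw [Finset.sum_range_succ, mul_add]
    have ht : (0:ℝ) < (n:ℝ) + 1 := by positivity
    have key : ((n:ℝ) + 1) ^ (p+1) - (n:ℝ) ^ (p+1) ≤ (p+1) * ((n:ℝ) + 1) ^ p := by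
      have hs : (-1 : ℝ) ≤ -(1/((n:ℝ)+1)) := by
        rw [neg_le_neg_iff]
        exact div_le_one_of_le₀ (by linarith) ht.le
      have hb := one_add_mul_self_le_rpow_one_add hs (by linarith : (1:ℝ) ≤ p + 1)
      have h1s : (1 : ℝ) + -(1/((n:ℝ)+1)) = (n:ℝ)/((n:ℝ)+1) := by
        field_simp
        ring
      rw [h1s] at hb
      have hdiv : ((n:ℝ)/((n:ℝ)+1)) ^ (p+1) = (n:ℝ)^(p+1) / ((n:ℝ)+1)^(p+1) :=
        Real.div_rpow (by positivity) ht.le _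
      rw [hdiv] at hb
      have htp : (0:ℝ) < ((n:ℝ)+1) ^ (p+1) := Real.rpow_pos_of_pos ht _
      have hb2 : (1 + (p+1) * -(1/((n:ℝ)+1))) * ((n:ℝ)+1)^(p+1) ≤ (n:ℝ)^(p+1) :=
        (le_div_iff₀ htp).1 hb
      have hpow : ((n:ℝ)+1)^(p+1) / ((n:ℝ)+1) = ((n:ℝ)+1)^p := by
        rw [Real.rpow_add_one ht.ne', mul_div_cancel_right₀ _ ht.ne']
      have expand : (1 + (p+1) * -(1/((n:ℝ)+1))) * ((n:ℝ)+1)^(p+1)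
          = ((n:ℝ)+1)^(p+1) - (p+1) * (((n:ℝ)+1)^(p+1) / ((n:ℝ)+1)) := by
        field_simp
        ring
      rw [expand, hpow] at hb2
      linarith
    push_cast
    linarith

lemma omega_rpow {k : ℕ} (hk : 1 ≤ k) :
    ω k ^ ((2:ℝ)/k) = Real.pi / Real.Gamma ((k : ℝ) / 2 + 1) ^ ((2:ℝ)/k) := by
  have hkne : (k:ℝ) ≠ 0 := by positivity
  rw [ω, Real.div_rpow (by positivity) (gamma_pos k).le]
  congr 1
  rw [← Real.rpow_natCast (Real.sqrt Real.pi) k, ← Real.rpow_mul (Real.sqrt_nonneg _)]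
  have : (k:ℝ) * ((2:ℝ)/k) = 2 := by field_simp
  rw [this, Real.rpow_two, Real.sq_sqrt Real.pi_pos.le]

end Stmt18Aux

open Stmt18Aux

set_option maxHeartbeats 1000000 in
theorem stmt18 (k : ℕ) (hk : 1 ≤ k) (ε : ℝ) (hε : 0 < ε) :
    ∃ N₀ : ℕ, ∀ N : ℕ, N₀ ≤ N → ∀ z : Fin N → Fin k → ℤ, Function.Injective z →
      ∀ μ : Fin k → ℝ,
      (1 - ε) * ((k : ℝ) * Real.Gamma ((k : ℝ) / 2 + 1) ^ ((2 : ℝ) / k) /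
          (Real.pi * ((k : ℝ) + 2))) * (N : ℝ) ^ (1 + (2 : ℝ) / k) ≤
        ∑ i, ∑ j, ((z i j : ℝ) - μ j) ^ 2 := by
  have hkR : (0:ℝ) < k := by exact_mod_cast hk
  have hkne : (k:ℝ) ≠ 0 := hkR.ne'
  set c : ℝ := (k : ℝ) * Real.Gamma ((k : ℝ) / 2 + 1) ^ ((2 : ℝ) / k) /
      (Real.pi * ((k : ℝ) + 2)) with hc
  have hΓ := gamma_pos k
  have hΓq : (0:ℝ) < Real.Gamma ((k : ℝ) / 2 + 1) ^ ((2 : ℝ) / k) :=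
    Real.rpow_pos_of_pos hΓ _
  have hc_pos : 0 < c := by rw [hc]; positivity
  set Cst : ℝ := 2 * Real.sqrt k / ω k ^ ((1:ℝ)/k) with hCst
  have hω := omega_pos k
  have hω1 : (0:ℝ) < ω k ^ ((1:ℝ)/k) := Real.rpow_pos_of_pos hω _
  have hω2 : (0:ℝ) < ω k ^ ((2:ℝ)/k) := Real.rpow_pos_of_pos hω _
  have hCst0 : 0 ≤ Cst := by positivity
  have htend : Filter.Tendsto (fun n : ℕ => (n:ℝ) ^ ((1:ℝ)/k)) Filter.atTop Filter.atTop :=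
    (tendsto_rpow_atTop (by positivity)).comp tendsto_natCast_atTop_atTop
  obtain ⟨N₁, hN₁⟩ := Filter.eventually_atTop.1 (htend.eventually_ge_atTop (Cst / (ε * c)))
  refine ⟨max N₁ 1, fun N hN z hz μ => ?_⟩
  have hN1 : 1 ≤ N := le_trans (le_max_right _ _) hN
  have hNpos : (0:ℝ) < N := by exact_mod_cast hN1
  have hNrpow : Cst / (ε * c) ≤ (N:ℝ) ^ ((1:ℝ)/k) := hN₁ N (le_trans (le_max_left _ _) hN)
  set D : Fin N → ℝ := fun i => Real.sqrt (∑ j, ((z i j : ℝ) - μ j) ^ 2) with hD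
  have hD0 : ∀ i, 0 ≤ D i := fun i => Real.sqrt_nonneg _
  have hDsq : ∀ i, D i ^ 2 = ∑ j, ((z i j : ℝ) - μ j) ^ 2 := fun i =>
    Real.sq_sqrt (Finset.sum_nonneg fun j _ => sq_nonneg _)
  set σ : Equiv.Perm (Fin N) := Tuple.sort D with hσ
  set e : Fin N → ℝ := fun i => D (σ i) with he
  have hemono : Monotone e := Tuple.monotone_sort D
  have he0 : ∀ i, 0 ≤ e i := fun i => hD0 _
  have hSeq : ∑ i, ∑ j, ((z i j : ℝ) - μ j) ^ 2 = ∑ i, e i ^ 2 := by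
    calc ∑ i, ∑ j, ((z i j : ℝ) - μ j) ^ 2 = ∑ i, D i ^ 2 :=
          Finset.sum_congr rfl fun i _ => (hDsq i).symm
      _ = ∑ i, e i ^ 2 := (Equiv.sum_comp σ (fun i => D i ^ 2)).symm
  have hcount : ∀ i : Fin N, ((i:ℕ) + 1 : ℝ) ≤ ω k * (e i + Real.sqrt k) ^ k := by
    intro i
    have hcardle := count_le hk z hz μ (e i) (he0 i)
    have hsubset : (i:ℕ) + 1 ≤ (Finset.univ.filter fun j : Fin N =>
        ∑ l, ((z j l : ℝ) - μ l) ^ 2 ≤ (e i) ^ 2).card := by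
      rw [← Fin.card_Iic i]
      refine Finset.card_le_card_of_injOn σ (fun j hj => ?_) (σ.injective.injOn)
      rw [Finset.mem_coe, Finset.mem_filter]
      refine ⟨Finset.mem_univ _, ?_⟩
      rw [← hDsq (σ j)]
      have : e j ≤ e i := hemono (Finset.mem_Iic.1 hj)
      exact pow_le_pow_left₀ (he0 j) this 2
    calc ((i:ℕ) + 1 : ℝ) ≤ ((Finset.univ.filter fun j : Fin N =>
          ∑ l, ((z j l : ℝ) - μ l) ^ 2 ≤ (e i) ^ 2).card : ℝ) := by exact_mod_cast hsubset
      _ ≤ ω k * (e i + Real.sqrt k) ^ k := hcardle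
  set a : Fin N → ℝ := fun i => ((((i:ℕ) : ℝ) + 1) / ω k) ^ ((1:ℝ)/k) with ha
  have ha0 : ∀ i, 0 ≤ a i := fun i => Real.rpow_nonneg (by positivity) _
  have hea : ∀ i, a i ≤ e i + Real.sqrt k := by
    intro i
    have h1 : (((i:ℕ) : ℝ) + 1) / ω k ≤ (e i + Real.sqrt k) ^ k := by
      rw [div_le_iff₀ hω, mul_comm]
      exact hcount i
    have h2 : ((((i:ℕ) : ℝ) + 1) / ω k) ^ ((1:ℝ)/k) ≤ ((e i + Real.sqrt k) ^ k) ^ ((1:ℝ)/k) :=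
      Real.rpow_le_rpow (by positivity) h1 (by positivity)
    have hek : (0:ℝ) ≤ e i + Real.sqrt k := by positivity
    have h3 : ((e i + Real.sqrt k) ^ k) ^ ((1:ℝ)/k) = e i + Real.sqrt k := by
      rw [← Real.rpow_natCast (e i + Real.sqrt k) k, ← Real.rpow_mul hek,
        mul_one_div, div_self hkne, Real.rpow_one]
    rw [h3] at h2
    exact h2
  have hsq : ∀ i, a i ^ 2 - 2 * Real.sqrt k * a i ≤ e i ^ 2 := by
    intro i
    have h := hea i
    have hsk : (0:ℝ) ≤ Real.sqrt k := Real.sqrt_nonneg _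
    by_cases hcase : a i ≤ Real.sqrt k
    · nlinarith [ha0 i, sq_nonneg (e i)]
    · push_neg at hcase
      have h1 : 0 ≤ a i - Real.sqrt k := by linarith
      have h2 : a i - Real.sqrt k ≤ e i := by linarith
      nlinarith [mul_self_le_mul_self h1 h2]
  have hasq : ∀ i : Fin N, a i ^ 2 = (((i:ℕ) : ℝ) + 1) ^ ((2:ℝ)/k) / ω k ^ ((2:ℝ)/k) := by
    intro i
    rw [ha]
    rw [← Real.rpow_natCast (((((i:ℕ) : ℝ) + 1) / ω k) ^ ((1:ℝ)/k)) 2,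
      ← Real.rpow_mul (by positivity)]
    have h12 : (1:ℝ)/k * ((2:ℕ) : ℝ) = (2:ℝ)/k := by push_cast; ring
    rw [h12, Real.div_rpow (by positivity) hω.le]
  -- key constant identity
  have hX : ((2:ℝ)/k + 1) * ω k ^ ((2:ℝ)/k) = 1 / c := by
    have hk2 : (k:ℝ) + 2 ≠ 0 := by positivity
    rw [omega_rpow hk, hc]
    field_simp
    ring
  have hsum_asq : c * (N:ℝ) ^ (1 + (2:ℝ)/k) ≤ ∑ i, a i ^ 2 := by
    have hS := sum_rpow_lower ((2:ℝ)/k) (by positivity) N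
    have hfin : ∑ i : Fin N, ((((i:ℕ) : ℝ) + 1)) ^ ((2:ℝ)/k)
        = ∑ m ∈ Finset.range N, ((m:ℝ) + 1) ^ ((2:ℝ)/k) :=
      Fin.sum_univ_eq_sum_range (fun m => ((m:ℝ) + 1) ^ ((2:ℝ)/k)) N
    have hp1 : (0:ℝ) < (2:ℝ)/k + 1 := by positivity
    have heq : ∑ i : Fin N, a i ^ 2
        = (∑ m ∈ Finset.range N, ((m:ℝ) + 1) ^ ((2:ℝ)/k)) / ω k ^ ((2:ℝ)/k) := by
      rw [← hfin, Finset.sum_div]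
      exact Finset.sum_congr rfl fun i _ => hasq i
    rw [heq]
    have hc' : c * (N:ℝ) ^ (1 + (2:ℝ)/k)
        = ((N:ℝ) ^ ((2:ℝ)/k + 1) / ((2:ℝ)/k + 1)) / ω k ^ ((2:ℝ)/k) := by
      rw [add_comm (1:ℝ) ((2:ℝ)/k), div_div, hX]
      rw [div_div_eq_mul_div, div_one, mul_comm, ← mul_div_assoc, mul_comm]
    rw [hc']
    have hnum : (N:ℝ) ^ ((2:ℝ)/k + 1) / ((2:ℝ)/k + 1)
        ≤ ∑ m ∈ Finset.range N, ((m:ℝ) + 1) ^ ((2:ℝ)/k) := by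
      rw [div_le_iff₀ hp1, mul_comm]
      exact hS
    gcongr
  have hsum_a : ∑ i, a i ≤ (N:ℝ) * ((N:ℝ) ^ ((1:ℝ)/k) / ω k ^ ((1:ℝ)/k)) := by
    have hbnd : ∀ i : Fin N, a i ≤ (N:ℝ) ^ ((1:ℝ)/k) / ω k ^ ((1:ℝ)/k) := by
      intro i
      rw [ha, ← Real.div_rpow (Nat.cast_nonneg N) hω.le]
      apply Real.rpow_le_rpow (by positivity) _ (by positivity)
      have hiN : ((i:ℕ) + 1 : ℕ) ≤ N := i.2
      gcongr
      exact_mod_cast hiN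
    calc ∑ i, a i ≤ ∑ _i : Fin N, (N:ℝ) ^ ((1:ℝ)/k) / ω k ^ ((1:ℝ)/k) :=
          Finset.sum_le_sum fun i _ => hbnd i
      _ = (N:ℝ) * ((N:ℝ) ^ ((1:ℝ)/k) / ω k ^ ((1:ℝ)/k)) := by
          rw [Finset.sum_const, Finset.card_univ, Fintype.card_fin, nsmul_eq_mul]
  have hsum_lower : ∑ i, a i ^ 2 - 2 * Real.sqrt k * ∑ i, a i ≤ ∑ i, e i ^ 2 := by
    have := Finset.sum_le_sum fun i (_ : i ∈ Finset.univ) => hsq i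
    rw [Finset.sum_sub_distrib, ← Finset.mul_sum] at this
    exact this
  have hN11 : (N:ℝ) ^ (1 + (1:ℝ)/k) = (N:ℝ) * (N:ℝ) ^ ((1:ℝ)/k) := by
    rw [Real.rpow_add hNpos, Real.rpow_one]
  have hf3 : 2 * Real.sqrt k * ∑ i, a i ≤ Cst * (N:ℝ) ^ (1 + (1:ℝ)/k) := by
    have h := mul_le_mul_of_nonneg_left hsum_a (by positivity : (0:ℝ) ≤ 2 * Real.sqrt k)
    calc 2 * Real.sqrt k * ∑ i, a i
        ≤ 2 * Real.sqrt k * ((N:ℝ) * ((N:ℝ) ^ ((1:ℝ)/k) / ω k ^ ((1:ℝ)/k))) := h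
      _ = Cst * (N:ℝ) ^ (1 + (1:ℝ)/k) := by
          rw [hCst, hN11]; field_simp
  have hf4 : Cst * (N:ℝ) ^ (1 + (1:ℝ)/k) ≤ ε * c * (N:ℝ) ^ (1 + (2:ℝ)/k) := by
    have hεc : (0:ℝ) < ε * c := by positivity
    have h1 : Cst ≤ ε * c * (N:ℝ) ^ ((1:ℝ)/k) := by
      rw [div_le_iff₀ hεc] at hNrpow
      linarith [hNrpow]
    have h2 : (N:ℝ) ^ ((1:ℝ)/k) * (N:ℝ) ^ (1 + (1:ℝ)/k) = (N:ℝ) ^ (1 + (2:ℝ)/k) := by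
      rw [← Real.rpow_add hNpos]
      congr 1
      field_simp
      ring
    calc Cst * (N:ℝ) ^ (1 + (1:ℝ)/k)
        ≤ ε * c * (N:ℝ) ^ ((1:ℝ)/k) * (N:ℝ) ^ (1 + (1:ℝ)/k) := by
          apply mul_le_mul_of_nonneg_right h1 (by positivity)
      _ = ε * c * (N:ℝ) ^ (1 + (2:ℝ)/k) := by rw [mul_assoc, h2]
  rw [hSeq]
  nlinarith [hsum_asq, hsum_lower, hf3, hf4]

-- #print axioms check
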